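/- Let I = (G, T, R, k, l) be an MMCU instance and let u, v ∈ T be two distinct terminals with (u, v) ∈ R such that uv ∈ E(G) or |N_G(u) ∩ N_G(v)| > k + l. Let I' be the instance obtained from I by identifying the terminals u and v. Then the set of minimal solutions of I and the set of minimal solutions of I' coincide (under the natural correspondence between the edges of G not joining u and v and the edges of the identified graph). -/

import Mathlib

/-- A multigraph on vertex type `V` with edge type `E`: each edge has an
unordered pair of endpoints. -/
structure Multigraph (V : Type*) (E : Type*) where
  ends : E → Sym2 V

namespace Multigraph

variable {V E : Type*}

/-- The multigraph has no self-loops. -/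
def Loopless (G : Multigraph V E) : Prop := ∀ e : E, ¬ (G.ends e).IsDiag

/-- Two vertices are adjacent if some edge joins them. -/
def Adj (G : Multigraph V E) (a b : V) : Prop := ∃ e : E, G.ends e = s(a, b)

/-- The (open) neighbourhood of a vertex. -/
def nbhd (G : Multigraph V E) (v : V) : Set V := {u | G.Adj v u}

/-- The neighbourhood `N_G(D)` of a set of vertices. -/
def setNbhd (G : Multigraph V E) (D : Set V) : Set V :=
  {u | u ∉ D ∧ ∃ d ∈ D, G.Adj u d}

/-- One step along an edge of `G − (X, F)`. -/
def Step (G : Multigraph V E) (X : Set V) (F : Set E) (a b : V) : Prop :=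
  a ∉ X ∧ b ∉ X ∧ ∃ e : E, e ∉ F ∧ G.ends e = s(a, b)

/-- `u` and `v` lie in the same connected component of `G − (X, F)`. -/
def Conn (G : Multigraph V E) (X : Set V) (F : Set E) (u v : V) : Prop :=
  u ∉ X ∧ v ∉ X ∧ Relation.ReflTransGen (G.Step X F) u v

end Multigraph

/-- `R` is an equivalence relation on the set `T` (and vanishes outside `T`). -/
def IsEquivOn {V : Type*} (T : Set V) (R : V → V → Prop) : Prop :=
  (∀ u v, R u v → u ∈ T ∧ v ∈ T) ∧ (∀ u ∈ T, R u u) ∧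
    (∀ u v, R u v → R v u) ∧ (∀ u v w, R u v → R v w → R u w)

/-- `(X, F)` is a solution to the MMCU instance `(G, T, R, k, l)`. -/
def IsSolution {V E : Type*} (G : Multigraph V E) (T : Set V) (R : V → V → Prop)
    (k l : ℕ) (X : Set V) (F : Set E) : Prop :=
  X ⊆ Tᶜ ∧ X.ncard ≤ k ∧ F.ncard ≤ l ∧
    ∀ u ∈ T, ∀ v ∈ T, (G.Conn X F u v ↔ R u v)

/-- `(X, F)` is a minimal solution to the MMCU instance `(G, T, R, k, l)`. -/
def IsMinSolution {V E : Type*} (G : Multigraph V E) (T : Set V) (R : V → V → Prop)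
    (k l : ℕ) (X : Set V) (F : Set E) : Prop :=
  IsSolution G T R k l X F ∧
    ∀ X' F', IsSolution G T R k l X' F' → X' ⊆ X → F' ⊆ F → X' = X ∧ F' = F

/-- The graph obtained from `G` by identifying the vertices `u` and `v` (the merged
vertex is represented by `u`): edges joining `u` and `v` are discarded, and every other
edge has each endpoint equal to `v` replaced by `u`. -/
def Multigraph.identify {V E : Type*} [DecidableEq V] (G : Multigraph V E) (u v : V) :
    Multigraph V {e : E // G.ends e ≠ s(u, v)} where
  ends := fun e => (G.ends e.1).map (fun x => if x = v then u else x)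

namespace Multigraph
variable {V E : Type*} {G : Multigraph V E} {X : Set V} {F : Set E}

lemma sym2_exists {α : Type*} (s : Sym2 α) : ∃ a b, s = s(a, b) := by
  induction s using Sym2.ind with
  | _ a b => exact ⟨a, b, rfl⟩

lemma Step.symm' {a b : V} (h : G.Step X F a b) : G.Step X F b a := by
  obtain ⟨ha, hb, e, he, hends⟩ := h
  exact ⟨hb, ha, e, he, by rw [hends, Sym2.eq_swap]⟩

lemma rtg_symm {a b : V} (h : Relation.ReflTransGen (G.Step X F) a b) :
    Relation.ReflTransGen (G.Step X F) b a :=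
  by haveI : Std.Symm (G.Step X F) := ⟨fun _ _ h => Step.symm' h⟩; exact Std.Symm.symm _ _ h

lemma Conn.symm' {a b : V} (h : G.Conn X F a b) : G.Conn X F b a :=
  ⟨h.2.1, h.1, rtg_symm h.2.2⟩

lemma Conn.trans' {a b c : V} (h1 : G.Conn X F a b) (h2 : G.Conn X F b c) : G.Conn X F a c :=
  ⟨h1.1, h2.2.1, h1.2.2.trans h2.2.2⟩

lemma Step.monoF {F₂ : Set E} (hF : F₂ ⊆ F) {a b : V} (h : G.Step X F a b) :
    G.Step X F₂ a b := by
  obtain ⟨ha, hb, e, he, hends⟩ := h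
  exact ⟨ha, hb, e, fun h' => he (hF h'), hends⟩

end Multigraph

section Ident
variable {V E : Type*} [DecidableEq V] {G : Multigraph V E} {u v : V}
  {X : Set V} {F' : Set {e : E // G.ends e ≠ s(u, v)}}

open Multigraph

/-- the merge map -/
def mrg (u v : V) (x : V) : V := if x = v then u else x

lemma mrg_ne_v (huv : u ≠ v) (x : V) : mrg u v x ≠ v := by
  unfold mrg; split <;> simp_all

lemma mrg_notMem (huX : u ∉ X) {a : V} (ha : a ∉ X) : mrg u v a ∉ X := by
  unfold mrg; split <;> assumption

lemma identify_ends_ne_v (huv : u ≠ v) {e' : {e : E // G.ends e ≠ s(u, v)}} {a b : V}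
    (h : (G.identify u v).ends e' = s(a, b)) : a ≠ v ∧ b ≠ v := by
  obtain ⟨p, q, hpq⟩ := sym2_exists (G.ends e'.1)
  have : (G.identify u v).ends e' = s(mrg u v p, mrg u v q) := by
    show (G.ends e'.1).map _ = _
    rw [hpq, Sym2.map_pair_eq]; rfl
  rw [this] at h
  rcases Sym2.eq_iff.mp h with ⟨h1, h2⟩ | ⟨h1, h2⟩
  · exact ⟨h1 ▸ mrg_ne_v huv p, h2 ▸ mrg_ne_v huv q⟩
  · exact ⟨h2 ▸ mrg_ne_v huv q, h1 ▸ mrg_ne_v huv p⟩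

lemma step_up (huv : u ≠ v) (huX : u ∉ X) {a b : V}
    (h : G.Step X (Subtype.val '' F') a b) :
    Relation.ReflTransGen ((G.identify u v).Step X F') (mrg u v a) (mrg u v b) := by
  obtain ⟨ha, hb, e, he, hends⟩ := h
  by_cases hd : G.ends e = s(u, v)
  · rw [hd] at hends
    have : mrg u v a = mrg u v b := by
      rcases Sym2.eq_iff.mp hends with ⟨h1, h2⟩ | ⟨h1, h2⟩ <;>
        subst h1 <;> subst h2 <;> simp [mrg, huv]
    rw [this]
  · refine Relation.ReflTransGen.single ⟨mrg_notMem huX ha, mrg_notMem huX hb, ⟨e, hd⟩, ?_, ?_⟩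
    · intro h'; exact he ⟨⟨e, hd⟩, h', rfl⟩
    · show (G.ends e).map _ = _
      rw [hends, Sym2.map_pair_eq]; rfl

lemma step_down (huv : u ≠ v) (hCuv : G.Conn X (Subtype.val '' F') u v) {a b : V}
    (h : (G.identify u v).Step X F' a b) :
    Relation.ReflTransGen (G.Step X (Subtype.val '' F')) a b := by
  obtain ⟨ha, hb, ⟨e, hd⟩, heF, hends⟩ := h
  obtain ⟨p, q, hpq⟩ := sym2_exists (G.ends e)
  have hends' : s(mrg u v p, mrg u v q) = s(a, b) := by
    rw [show (G.identify u v).ends ⟨e, hd⟩ = s(mrg u v p, mrg u v q) from by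
      show (G.ends e).map _ = _; rw [hpq, Sym2.map_pair_eq]; rfl] at hends
    exact hends
  have heF' : e ∉ Subtype.val '' F' := by
    rintro ⟨e₂, he₂, hval⟩
    have : e₂ = ⟨e, hd⟩ := Subtype.ext hval
    exact heF (this ▸ he₂)
  have hvX : v ∉ X := hCuv.2.1
  have bridge : ∀ p : V, p ∉ X → Relation.ReflTransGen (G.Step X (Subtype.val '' F'))
      (mrg u v p) p := by
    intro p hp
    by_cases hpv : p = v
    · rw [hpv, show mrg u v v = u from if_pos rfl]; exact hCuv.2.2
    · rw [show mrg u v p = p from if_neg hpv]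
  have hpX : p ∉ X := by
    by_cases hpv : p = v
    · exact hpv ▸ hvX
    · have : mrg u v p = p := if_neg hpv
      rcases Sym2.eq_iff.mp hends' with ⟨h1, _⟩ | ⟨h1, _⟩ <;> rw [← this, h1] <;> assumption
  have hqX : q ∉ X := by
    by_cases hqv : q = v
    · exact hqv ▸ hvX
    · have : mrg u v q = q := if_neg hqv
      rcases Sym2.eq_iff.mp hends' with ⟨_, h2⟩ | ⟨_, h2⟩ <;> rw [← this, h2] <;> assumption
  have hstep : G.Step X (Subtype.val '' F') p q := ⟨hpX, hqX, e, heF', hpq⟩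
  rcases Sym2.eq_iff.mp hends' with ⟨h1, h2⟩ | ⟨h1, h2⟩
  · exact ((h1 ▸ bridge p hpX).trans (Relation.ReflTransGen.single hstep)).trans
      (rtg_symm (h2 ▸ bridge q hqX))
  · exact ((h2 ▸ bridge q hqX).trans (Relation.ReflTransGen.single hstep.symm')).trans
      (rtg_symm (h1 ▸ bridge p hpX))

lemma conn_up (huv : u ≠ v) (huX : u ∉ X) {a b : V} (h : G.Conn X (Subtype.val '' F') a b) :
    (G.identify u v).Conn X F' (mrg u v a) (mrg u v b) := by
  obtain ⟨ha, hb, hr⟩ := h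
  refine ⟨mrg_notMem huX ha, mrg_notMem huX hb, ?_⟩
  induction hr with
  | refl => exact Relation.ReflTransGen.refl
  | tail _ hstep ih => exact (ih hstep.1).trans (step_up huv huX hstep)

lemma conn_down (huv : u ≠ v) (hCuv : G.Conn X (Subtype.val '' F') u v) {a b : V}
    (h : (G.identify u v).Conn X F' a b) : G.Conn X (Subtype.val '' F') a b := by
  obtain ⟨ha, hb, hr⟩ := h
  refine ⟨ha, hb, ?_⟩
  induction hr with
  | refl => exact Relation.ReflTransGen.refl
  | tail _ hstep ih => exact (ih hstep.1).trans (step_down huv hCuv hstep)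

lemma conn_iff (huv : u ≠ v) (hCuv : G.Conn X (Subtype.val '' F') u v) {a b : V}
    (haX : a ∉ X) (hbX : b ∉ X) :
    G.Conn X (Subtype.val '' F') a b ↔ (G.identify u v).Conn X F' (mrg u v a) (mrg u v b) := by
  constructor
  · exact conn_up huv hCuv.1
  · intro h
    have h2 := conn_down huv hCuv h
    have bridge : ∀ p : V, p ∉ X → G.Conn X (Subtype.val '' F') p (mrg u v p) := by
      intro p hp
      by_cases hpv : p = v
      · rw [hpv, show mrg u v v = u from if_pos rfl]; exact hCuv.symm'
      · rw [show mrg u v p = p from if_neg hpv]; exact ⟨hp, hp, Relation.ReflTransGen.refl⟩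
    exact ((bridge a haX).trans' h2).trans' (bridge b hbX).symm'

end Ident

open Multigraph in
lemma conn_uv {V E : Type*} [Fintype V] [Fintype E] [DecidableEq V]
    {G : Multigraph V E} (hG : G.Loopless) {u v : V} (huv : u ≠ v) {k l : ℕ}
    (hcond : (∃ e : E, G.ends e = s(u, v)) ∨ k + l < (G.nbhd u ∩ G.nbhd v).ncard)
    {X : Set V} {F' : Set {e : E // G.ends e ≠ s(u, v)}}
    (huX : u ∉ X) (hvX : v ∉ X)
    (hk : X.ncard ≤ k) (hl : F'.ncard ≤ l) :
    G.Conn X (Subtype.val '' F') u v := by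
  set F : Set E := Subtype.val '' F' with hF
  have hlF : F.ncard ≤ l := by
    rw [hF, Set.ncard_image_of_injective _ Subtype.val_injective]; exact hl
  rcases hcond with ⟨e0, he0⟩ | hbig
  · have he0F : e0 ∉ F := by
      rintro ⟨e', _, rfl⟩; exact e'.2 he0
    exact ⟨huX, hvX, Relation.ReflTransGen.single ⟨huX, hvX, e0, he0F, he0⟩⟩
  · set S : Set V := G.nbhd u ∩ G.nbhd v with hS
    have huS : u ∉ S := by
      rintro ⟨⟨e, he⟩, -⟩
      exact hG e (by rw [he]; simp)
    have hvS : v ∉ S := by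
      rintro ⟨-, ⟨e, he⟩⟩
      exact hG e (by rw [he]; simp)
    set SF : Set V := {w | ∃ e ∈ F, G.ends e = s(u, w) ∨ G.ends e = s(v, w)} with hSF
    have hEne : Nonempty E := by
      have : S.Nonempty := by
        apply Set.nonempty_of_ncard_ne_zero; omega
      obtain ⟨w0, hw0⟩ := this
      exact ⟨hw0.1.choose⟩
    have hcard2 : (S ∩ SF).ncard ≤ F.ncard := by
      classical
      set f : V → E := fun w =>
        if h : ∃ e, e ∈ F ∧ (G.ends e = s(u, w) ∨ G.ends e = s(v, w)) then h.choose
        else Classical.arbitrary E with hf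
      have hspec : ∀ w ∈ S ∩ SF, f w ∈ F ∧ (G.ends (f w) = s(u, w) ∨ G.ends (f w) = s(v, w)) := by
        intro w hw
        obtain ⟨e, heF, hor⟩ := hw.2
        have h : ∃ e, e ∈ F ∧ (G.ends e = s(u, w) ∨ G.ends e = s(v, w)) := ⟨e, heF, hor⟩
        rw [hf]; simp only [dif_pos h]; exact h.choose_spec
      apply Set.ncard_le_ncard_of_injOn f (fun w hw => (hspec w hw).1) _ F.toFinite
      intro w₁ hw₁ w₂ hw₂ hew
      obtain ⟨-, hor₁⟩ := hspec w₁ hw₁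
      obtain ⟨-, hor₂⟩ := hspec w₂ hw₂
      rw [hew] at hor₁
      rcases hor₁ with h₁ | h₁ <;> rcases hor₂ with h₂ | h₂ <;> rw [h₂] at h₁
      · rcases Sym2.eq_iff.mp h₁ with ⟨ha, hb⟩ | ⟨ha, hb⟩
        · exact hb.symm
        · exact absurd (hb ▸ hw₂.1) huS
      · rcases Sym2.eq_iff.mp h₁ with ⟨ha, hb⟩ | ⟨ha, hb⟩
        · exact absurd ha.symm huv
        · exact absurd (hb ▸ hw₂.1) huS
      · rcases Sym2.eq_iff.mp h₁ with ⟨ha, hb⟩ | ⟨ha, hb⟩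
        · exact absurd ha huv
        · exact absurd (hb ▸ hw₂.1) hvS
      · rcases Sym2.eq_iff.mp h₁ with ⟨ha, hb⟩ | ⟨ha, hb⟩
        · exact hb.symm
        · exact absurd (hb ▸ hw₂.1) hvS
    have h1 : (S ∩ X).ncard ≤ k :=
      le_trans (Set.ncard_le_ncard Set.inter_subset_right X.toFinite) hk
    have h2 : (S ∩ SF).ncard ≤ l := hcard2.trans hlF
    have hns : ¬ (S ⊆ (S ∩ X) ∪ (S ∩ SF)) := by
      intro hsub
      have hc := Set.ncard_le_ncard hsub (Set.toFinite _)
      have hle := Set.ncard_union_le (S ∩ X) (S ∩ SF)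
      omega
    obtain ⟨w, hwS, hw'⟩ := Set.not_subset.mp hns
    have hwX : w ∉ X := fun h => hw' (Or.inl ⟨hwS, h⟩)
    have hwSF : w ∉ SF := fun h => hw' (Or.inr ⟨hwS, h⟩)
    obtain ⟨eu, heu⟩ := hwS.1
    obtain ⟨ev, hev⟩ := hwS.2
    have heuF : eu ∉ F := fun h => hwSF ⟨eu, h, Or.inl heu⟩
    have hevF : ev ∉ F := fun h => hwSF ⟨ev, h, Or.inr hev⟩
    exact ⟨huX, hvX, (Relation.ReflTransGen.single ⟨huX, hwX, eu, heuF, heu⟩).trans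
      (Relation.ReflTransGen.single ⟨hwX, hvX, ev, hevF, by rw [hev, Sym2.eq_swap]⟩)⟩

open Multigraph in
lemma sol_iff {V E : Type*} [Fintype V] [Fintype E] [DecidableEq V]
    {G : Multigraph V E} (hG : G.Loopless)
    {T : Set V} {R : V → V → Prop} (hR : IsEquivOn T R) {k l : ℕ}
    {u v : V} (huv : u ≠ v) (hu : u ∈ T) (hv : v ∈ T) (hRuv : R u v)
    (hcond : (∃ e : E, G.ends e = s(u, v)) ∨ k + l < (G.nbhd u ∩ G.nbhd v).ncard)
    {X : Set V} (hvX : v ∉ X) (F' : Set {e : E // G.ends e ≠ s(u, v)}) :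
    IsSolution (G.identify u v) (T \ {v}) (fun a b => a ≠ v ∧ b ≠ v ∧ R a b) k l X F' ↔
      IsSolution G T R k l X (Subtype.val '' F') := by
  have huT' : u ∈ T \ {v} := ⟨hu, by simp [huv]⟩
  have hRm : ∀ a ∈ T, R a (mrg u v a) := by
    intro a ha
    by_cases hav : a = v
    · rw [hav, show mrg u v v = u from if_pos rfl]
      exact hR.2.2.1 _ _ hRuv
    · rw [show mrg u v a = a from if_neg hav]
      exact hR.2.1 a ha
  have hmT' : ∀ a ∈ T, mrg u v a ∈ T \ {v} := by
    intro a ha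
    by_cases hav : a = v
    · rw [hav, show mrg u v v = u from if_pos rfl]; exact huT'
    · rw [show mrg u v a = a from if_neg hav]; exact ⟨ha, by simp [hav]⟩
  have hncard : (Subtype.val '' F').ncard = F'.ncard :=
    Set.ncard_image_of_injective _ Subtype.val_injective
  constructor
  · rintro ⟨hXT, hXk, hFl, hconn⟩
    have huX : u ∉ X := fun h => hXT h huT'
    have hXTc : X ⊆ Tᶜ := by
      intro x hx hxT
      by_cases hxv : x = v
      · exact hvX (hxv ▸ hx)
      · exact hXT hx ⟨hxT, by simp [hxv]⟩
    have hCuv := conn_uv hG huv hcond huX hvX hXk hFl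
    refine ⟨hXTc, hXk, by rw [hncard]; exact hFl, ?_⟩
    intro a ha b hb
    have haX : a ∉ X := fun h => hXTc h ha
    have hbX : b ∉ X := fun h => hXTc h hb
    rw [conn_iff huv hCuv haX hbX, hconn _ (hmT' a ha) _ (hmT' b hb)]
    constructor
    · rintro ⟨-, -, hr⟩
      exact hR.2.2.2 _ _ _ (hRm a ha) (hR.2.2.2 _ _ _ hr (hR.2.2.1 _ _ (hRm b hb)))
    · intro hr
      exact ⟨mrg_ne_v huv a, mrg_ne_v huv b,
        hR.2.2.2 _ _ _ (hR.2.2.1 _ _ (hRm a ha)) (hR.2.2.2 _ _ _ hr (hRm b hb))⟩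
  · rintro ⟨hXT, hXk, hFl, hconn⟩
    have huX : u ∉ X := fun h => hXT h hu
    have hCuv : G.Conn X (Subtype.val '' F') u v := (hconn u hu v hv).mpr hRuv
    refine ⟨fun x hx hxT' => hXT hx hxT'.1, hXk, hncard ▸ hFl, ?_⟩
    intro a ha b hb
    have hav : a ≠ v := by simpa using ha.2
    have hbv : b ≠ v := by simpa using hb.2
    have haX : a ∉ X := fun h => hXT h ha.1
    have hbX : b ∉ X := fun h => hXT h hb.1
    have hma : mrg u v a = a := if_neg hav
    have hmb : mrg u v b = b := if_neg hbv
    constructor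
    · intro h
      refine ⟨hav, hbv, ?_⟩
      have h2 : (G.identify u v).Conn X F' (mrg u v a) (mrg u v b) := by
        rw [hma, hmb]; exact h
      exact (hconn a ha.1 b hb.1).mp ((conn_iff huv hCuv haX hbX).mpr h2)
    · rintro ⟨-, -, hr⟩
      have h2 := (conn_iff huv hCuv haX hbX).mp ((hconn a ha.1 b hb.1).mpr hr)
      rw [hma, hmb] at h2; exact h2

open Multigraph in
lemma reroute {V E : Type*} {G : Multigraph V E} {X : Set V} {F : Set E} {u v : V}
    {e : E} (he : G.ends e = s(u, v)) (hCuv : G.Conn X F u v) {a b : V}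
    (h : Relation.ReflTransGen (G.Step X (F \ {e})) a b) :
    Relation.ReflTransGen (G.Step X F) a b := by
  induction h with
  | refl => exact Relation.ReflTransGen.refl
  | tail _ hstep ih =>
    obtain ⟨hp, hq, e', he', hends⟩ := hstep
    by_cases heF : e' ∈ F
    · have hee : e' = e := by
        by_contra hne
        exact he' ⟨heF, hne⟩
      rw [hee, he] at hends
      rcases Sym2.eq_iff.mp hends.symm with ⟨h1, h2⟩ | ⟨h1, h2⟩
      · exact ih.trans (h1 ▸ h2 ▸ hCuv.2.2)
      · exact ih.trans (h2 ▸ h1 ▸ rtg_symm hCuv.2.2)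
    · exact ih.trans (Relation.ReflTransGen.single ⟨hp, hq, e', heF, hends⟩)

open Multigraph in
lemma drop_v {V E : Type*} [DecidableEq V] {G : Multigraph V E}
    {T : Set V} {R' : V → V → Prop} {k l : ℕ} {u v : V} (huv : u ≠ v)
    {X : Set V} {F' : Set {e : E // G.ends e ≠ s(u, v)}} [Fintype V]
    (h : IsSolution (G.identify u v) (T \ {v}) R' k l X F') :
    IsSolution (G.identify u v) (T \ {v}) R' k l (X \ {v}) F' := by
  obtain ⟨hXT, hXk, hFl, hconn⟩ := h
  refine ⟨Set.Subset.trans Set.diff_subset hXT,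
    le_trans (Set.ncard_le_ncard Set.diff_subset X.toFinite) hXk, hFl, ?_⟩
  intro a ha b hb
  rw [← hconn a ha b hb]
  have key : ∀ p q, (G.identify u v).Step (X \ {v}) F' p q ↔ (G.identify u v).Step X F' p q := by
    intro p q
    constructor
    · rintro ⟨hp, hq, e', he', hends⟩
      have hne := identify_ends_ne_v huv hends
      exact ⟨fun h => hp ⟨h, hne.1⟩, fun h => hq ⟨h, hne.2⟩, e', he', hends⟩
    · rintro ⟨hp, hq, e', he', hends⟩
      exact ⟨fun h => hp h.1, fun h => hq h.1, e', he', hends⟩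
  have hsteps : (G.identify u v).Step (X \ {v}) F' = (G.identify u v).Step X F' :=
    funext fun p => funext fun q => propext (key p q)
  have hav : a ≠ v := by simpa using ha.2
  have hbv : b ≠ v := by simpa using hb.2
  unfold Multigraph.Conn
  rw [hsteps]
  constructor
  · rintro ⟨h1, h2, h3⟩
    exact ⟨fun h => h1 ⟨h, hav⟩, fun h => h2 ⟨h, hbv⟩, h3⟩
  · rintro ⟨h1, h2, h3⟩
    exact ⟨fun h => h1 h.1, fun h => h2 h.1, h3⟩

/-- Let `u, v` be distinct terminals with `(u, v) ∈ R` such that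
`uv ∈ E(G)` or `|N_G(u) ∩ N_G(v)| > k + l`, and let `I'` be the instance obtained from
`I` by identifying `u` and `v`. Then no minimal solution of `I` deletes an edge joining
`u` and `v`, and (under the natural correspondence of the remaining edges) the minimal
solutions of `I` and of `I'` coincide. -/
theorem stmt7 {V E : Type*} [Fintype V] [Fintype E] [DecidableEq V]
    (G : Multigraph V E) (hG : G.Loopless)
    (T : Set V) (R : V → V → Prop) (hR : IsEquivOn T R) (k l : ℕ)
    (u v : V) (huv : u ≠ v) (hu : u ∈ T) (hv : v ∈ T) (hRuv : R u v)
    (hcond : (∃ e : E, G.ends e = s(u, v)) ∨ k + l < (G.nbhd u ∩ G.nbhd v).ncard) :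
    (∀ (X : Set V) (F : Set E), IsMinSolution G T R k l X F →
      ∀ e ∈ F, G.ends e ≠ s(u, v)) ∧
    (∀ (X : Set V) (F' : Set {e : E // G.ends e ≠ s(u, v)}),
      IsMinSolution (G.identify u v) (T \ {v})
          (fun a b => a ≠ v ∧ b ≠ v ∧ R a b) k l X F' ↔
        IsMinSolution G T R k l X (Subtype.val '' F')) := by
  constructor
  · rintro X F ⟨hsol, hmin⟩ e heF hends
    have hCuv : G.Conn X F u v := (hsol.2.2.2 u hu v hv).mpr hRuv
    have hsol2 : IsSolution G T R k l X (F \ {e}) := by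
      refine ⟨hsol.1, hsol.2.1,
        le_trans (Set.ncard_le_ncard Set.diff_subset F.toFinite) hsol.2.2.1, ?_⟩
      intro a ha b hb
      rw [← hsol.2.2.2 a ha b hb]
      constructor
      · rintro ⟨h1, h2, h3⟩
        exact ⟨h1, h2, reroute hends hCuv h3⟩
      · rintro ⟨h1, h2, h3⟩
        exact ⟨h1, h2,
          Relation.ReflTransGen.mono (fun p q (hs : G.Step X F p q) => hs.monoF Set.diff_subset) a b h3⟩
    have hFe := (hmin X (F \ {e}) hsol2 subset_rfl Set.diff_subset).2
    rw [← hFe] at heF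
    exact heF.2 rfl
  · intro X F'
    constructor
    · rintro ⟨hsol', hmin'⟩
      have hvX : v ∉ X := by
        by_contra hvX
        have h2 := drop_v huv hsol'
        have h3 := (hmin' (X \ {v}) F' h2 Set.diff_subset subset_rfl).1
        rw [← h3] at hvX
        exact hvX.2 rfl
      refine ⟨(sol_iff hG hR huv hu hv hRuv hcond hvX F').mp hsol', ?_⟩
      intro X₂ F₂ hsol₂ hX₂ hF₂
      have hF₂r : F₂ ⊆ Set.range (Subtype.val) := hF₂.trans (Set.image_subset_range _ _)
      have himg : Subtype.val '' (Subtype.val ⁻¹' F₂) = F₂ :=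
        Set.image_preimage_eq_of_subset hF₂r
      have hvX₂ : v ∉ X₂ := fun h => hvX (hX₂ h)
      have hsol₂' := (sol_iff hG hR huv hu hv hRuv hcond hvX₂ (Subtype.val ⁻¹' F₂)).mpr
        (by rw [himg]; exact hsol₂)
      have hsub' : Subtype.val ⁻¹' F₂ ⊆ F' := by
        intro e he
        obtain ⟨e₃, h₃, hval⟩ := hF₂ he
        exact (Subtype.ext hval : e₃ = e) ▸ h₃
      obtain ⟨hX, hF⟩ := hmin' X₂ (Subtype.val ⁻¹' F₂) hsol₂' hX₂ hsub'
      exact ⟨hX, by rw [← himg, hF]⟩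
    · rintro ⟨hsol, hmin⟩
      have hvX : v ∉ X := fun h => hsol.1 h hv
      refine ⟨(sol_iff hG hR huv hu hv hRuv hcond hvX F').mpr hsol, ?_⟩
      intro X₂ F₂' hsol₂' hX₂ hF₂'
      have hvX₂ : v ∉ X₂ := fun h => hvX (hX₂ h)
      have hsol₂ := (sol_iff hG hR huv hu hv hRuv hcond hvX₂ F₂').mp hsol₂'
      obtain ⟨hX, hF⟩ := hmin X₂ (Subtype.val '' F₂') hsol₂ hX₂ (Set.image_mono hF₂')
      exact ⟨hX, (Set.image_injective.mpr Subtype.val_injective) hF⟩
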